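/- arXiv:math/0409044 — 4 statements merged into one kernel-verified Lean document; each statement's English description precedes it below -/
import Mathlib

section
/- Fix integers n ≥ 3 and k ≥ 1 and κ ∈ ℂ ∖ {0}. Let D = diag(2n, 2(n−1), 0) and let N be the 3×3 complex matrix with rows (−n−k, (n−1)(k² + 2k(n−1) + n(n−2))/n, 0), (1, −n−k+1, k(k+2(n−1))/n), (0, 1, −k). Set K₁ = (2n + 3(k+κ) − 1)/κ, K₂ = −2(2n−1)/κ, L₁ = (1+k+κ)(κ+2(n+k−1))/κ², L₂ = 2(n−1)(2n+κ)/κ², L₃ = −2(2n² + 4kn + 3nκ − 2(n+k+κ))/κ², M₁ = −2k(n−1)(κ+2(n+k−1))/κ³, M₂ = 2k(n−1)(2n+κ)/κ³. Let U ⊆ ℂ ∖ {0, 1} be open and u, v, w : U → ℂ holomorphic. Then the vector-valued function g = (u, v, w) satisfies the linear system κ·g′(z) = (1/z)·D·g(z) + (1/(z−1))·N·g(z) on U if and only if w satisfies on U the Dotsenko–Fateev equation w‴(z) + ((K₁z + K₂(z−1))/(z(z−1)))·w″(z) + ((L₁z² + L₂(z−1)² + L₃z(z−1))/(z²(z−1)²))·w′(z)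 + ((M₁z + M₂(z−1))/(z²(z−1)²))·w(z) = 0 and moreover v(z) = k·w(z) + κ(z−1)·w′(z) and u(z) = (k(n−1)/z)·(2 − ((n−k+2)/n)·z)·w(z) + (κ(z−1)/z)·(2(n−1) + (κ−n+2k+1)·z)·w′(z) + κ²(z−1)²·w″(z) for all z ∈ U. In particular, g ↦ w = g₃ is a linear bijection from the space of holomorphic solutions of the system on U onto the space of holomorphic solutions of the Dotsenko–Fateev equation on U; in particular w = 0 forces g = 0. -/
noncomputable def dfK₁ (n k : ℕ) (κ : ℂ) : ℂ :=
  (2 * (n : ℂ) + 3 * ((k : ℂ) + κ) - 1) / κ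

noncomputable def dfK₂ (n : ℕ) (κ : ℂ) : ℂ :=
  -(2 * (2 * (n : ℂ) - 1)) / κ

noncomputable def dfL₁ (n k : ℕ) (κ : ℂ) : ℂ :=
  (1 + (k : ℂ) + κ) * (κ + 2 * ((n : ℂ) + (k : ℂ) - 1)) / κ ^ 2

noncomputable def dfL₂ (n : ℕ) (κ : ℂ) : ℂ :=
  2 * ((n : ℂ) - 1) * (2 * (n : ℂ) + κ) / κ ^ 2

noncomputable def dfL₃ (n k : ℕ) (κ : ℂ) : ℂ :=
  -(2 * (2 * (n : ℂ) ^ 2 + 4 * (k : ℂ) * (n : ℂ) + 3 * (n : ℂ) * κ -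
      2 * ((n : ℂ) + (k : ℂ) + κ))) / κ ^ 2

noncomputable def dfM₁ (n k : ℕ) (κ : ℂ) : ℂ :=
  -(2 * (k : ℂ) * ((n : ℂ) - 1) * (κ + 2 * ((n : ℂ) + (k : ℂ) - 1))) / κ ^ 3

noncomputable def dfM₂ (n k : ℕ) (κ : ℂ) : ℂ :=
  2 * (k : ℂ) * ((n : ℂ) - 1) * (2 * (n : ℂ) + κ) / κ ^ 3

private lemma kzdf_vderiv (k κ z w1 w2 : ℂ) (w : ℂ → ℂ)
    (hw1 : HasDerivAt w w1 z) (hw2 : HasDerivAt (deriv w) w2 z) :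
    HasDerivAt (fun y => k * w y + κ * (y - 1) * deriv w y)
      ((k + κ) * w1 + κ * (z - 1) * w2) z := by
  have h := (hw1.const_mul k).add
    ((((hasDerivAt_id' z).sub_const 1).const_mul κ).mul hw2)
  exact h.congr_deriv (by rw [hw1.deriv]; ring)

set_option maxHeartbeats 2000000 in
private lemma kzdf_uderiv (n k κ z w1 w2 w3 : ℂ) (w : ℂ → ℂ) (hz : z ≠ 0)
    (hw1 : HasDerivAt w w1 z) (hw2 : HasDerivAt (deriv w) w2 z)
    (hw3 : HasDerivAt (deriv (deriv w)) w3 z) :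
    HasDerivAt (fun y => (k * (n - 1) / y) * (2 - ((n - k + 2) / n) * y) * w y +
        (κ * (y - 1) / y) * (2 * (n - 1) + (κ - n + 2 * k + 1) * y) * deriv w y +
        κ ^ 2 * (y - 1) ^ 2 * deriv (deriv w) y)
      ((-(k * (n - 1)) / z ^ 2 * (2 - ((n - k + 2) / n) * z)
          - (k * (n - 1) / z) * ((n - k + 2) / n)) * w z +
        ((k * (n - 1) / z) * (2 - ((n - k + 2) / n) * z)
          + κ / z ^ 2 * (2 * (n - 1) + (κ - n + 2 * k + 1) * z)
          + κ * (z - 1) / z * (κ - n + 2 * k + 1)) * w1 +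
        ((κ * (z - 1) / z) * (2 * (n - 1) + (κ - n + 2 * k + 1) * z)
          + 2 * κ ^ 2 * (z - 1)) * w2 +
        κ ^ 2 * (z - 1) ^ 2 * w3) z := by
  have hA := (hasDerivAt_const z (k * (n - 1))).div (hasDerivAt_id' z) hz
  have hB := ((hasDerivAt_id' z).const_mul ((n - k + 2) / n)).const_sub 2
  have hC := (((hasDerivAt_id' z).sub_const 1).const_mul κ).div (hasDerivAt_id' z) hz
  have hD := ((hasDerivAt_id' z).const_mul (κ - n + 2 * k + 1)).const_add (2 * (n - 1))
  have hE := (((hasDerivAt_id' z).sub_const 1).pow 2).const_mul (κ ^ 2)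
  have h := (((hA.mul hB).mul hw1).add ((hC.mul hD).mul hw2)).add (hE.mul hw3)
  refine h.congr_deriv ?_
  rw [hw1.deriv, hw2.deriv]
  simp only [Pi.div_apply, Pi.mul_apply, Pi.pow_apply]
  ring

set_option maxHeartbeats 2000000 in
private lemma kzdf_alg2 (n k κ z W W1 W2 : ℂ) (hz : z ≠ 0) (hz1 : z - 1 ≠ 0)
    (hn : n ≠ 0) :
    κ * ((k + κ) * W1 + κ * (z - 1) * W2) =
      (2 * (n - 1) / z) * (k * W + κ * (z - 1) * W1) +
      (((k * (n - 1) / z) * (2 - ((n - k + 2) / n) * z) * W + (κ * (z - 1) / z) * (2 * (n - 1) + (κ - n + 2 * k + 1) * z) * W1 + κ ^ 2 * (z - 1) ^ 2 * W2) +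
        (-n - k + 1) * (k * W + κ * (z - 1) * W1) +
        (k * (k + 2 * (n - 1)) / n) * W) / (z - 1) := by
  rw [← sub_eq_iff_eq_add', eq_div_iff hz1]
  field_simp
  ring

set_option maxHeartbeats 2000000 in
private lemma kzdfL0 (n k κ z : ℂ) (hz : z ≠ 0) (hz1 : z - 1 ≠ 0) (hn : n ≠ 0) :
    κ * (-(k * (n - 1)) / z ^ 2 * (2 - ((n - k + 2) / n) * z)
          - (k * (n - 1) / z) * ((n - k + 2) / n)) =
      (2 * n / z) * ((k * (n - 1) / z) * (2 - ((n - k + 2) / n) * z)) +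
      ((-n - k) * ((k * (n - 1) / z) * (2 - ((n - k + 2) / n) * z)) +
        ((n - 1) * (k ^ 2 + 2 * k * (n - 1) + n * (n - 2)) / n) * k) / (z - 1) +
      (-(2 * k * (n - 1) * (κ + 2 * (n + k - 1))) * z +
        2 * k * (n - 1) * (2 * n + κ) * (z - 1)) / z ^ 2 := by
  have hz' : z * z⁻¹ = 1 := mul_inv_cancel₀ hz
  have hn' : n * n⁻¹ = 1 := mul_inv_cancel₀ hn
  have hs' : (z - 1) * (z - 1)⁻¹ = 1 := mul_inv_cancel₀ hz1
  linear_combination (((-2 : ℂ)) * (z - 1)⁻¹ * k ^ 2 + (2 : ℂ) * n⁻¹ * (z - 1)⁻¹ * k ^ 2 + ((-1 : ℂ)) * n⁻¹ * (z - 1)⁻¹ * k ^ 3 + ((-2 : ℂ)) * n * (z - 1)⁻¹ * k + (2 : ℂ) * n * (z - 1)⁻¹ * k ^ 2 + (2 : ℂ) * n * n⁻¹ * (z - 1)⁻¹ * k + ((-2 : ℂ)) * n * n⁻¹ * (z - 1)⁻¹ * k ^ 2 + n * n⁻¹ * (z - 1)⁻¹ * k ^ 3 + (2 : ℂ) * n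 ^ 2 * (z - 1)⁻¹ * k + ((-1 : ℂ)) * n ^ 2 * n⁻¹ * (z - 1)⁻¹ * k + ((-1 : ℂ)) * n ^ 3 * n⁻¹ * (z - 1)⁻¹ * k + (4 : ℂ) * z⁻¹ * k + ((-4 : ℂ)) * z⁻¹ * k ^ 2 + ((-2 : ℂ)) * z⁻¹ * n⁻¹ * k * κ + z⁻¹ * n⁻¹ * k ^ 2 * κ + ((-4 : ℂ)) * z⁻¹ * n * k + (4 : ℂ) * z⁻¹ * n * k ^ 2 + ((-4 : ℂ)) * z⁻¹ * n * n⁻¹ * k + z⁻¹ * n * n⁻¹ * k * κ + (2 : ℂ) * z⁻¹ * n * n⁻¹ * k ^ 2 + ((-1 : ℂ)) * z⁻¹ * n * n⁻¹ * k ^ 2 * κ + (2 : ℂ) * z⁻¹ * n ^ 2 * n⁻¹ * k + z⁻¹ * n ^ 2 * n⁻¹ * k * κ + ((-2 : ℂ)) * z⁻¹ * n ^ 2 * n⁻¹ * k ^ 2 + (2 : ℂ) * z⁻¹ * n ^ 3 * n⁻¹ * k) * hz' + ((2 : ℂ) * (z - 1)⁻¹ * k ^ 2 + (2 : ℂ)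 * n * (z - 1)⁻¹ * k + ((-2 : ℂ)) * n * (z - 1)⁻¹ * k ^ 2 + ((-2 : ℂ)) * n ^ 2 * (z - 1)⁻¹ * k + ((-4 : ℂ)) * z⁻¹ * k + (2 : ℂ) * z⁻¹ * k ^ 2 + (2 : ℂ) * z⁻¹ * n * k + ((-2 : ℂ)) * z⁻¹ * n * k ^ 2 + (2 : ℂ) * z⁻¹ * n ^ 2 * k) * hn' + ((2 : ℂ) * z⁻¹ * k ^ 2 + (2 : ℂ) * z⁻¹ * n * k + ((-2 : ℂ)) * z⁻¹ * n * k ^ 2 + ((-2 : ℂ)) * z⁻¹ * n ^ 2 * k) * hs'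

set_option maxHeartbeats 2000000 in
private lemma kzdfL1 (n k κ z : ℂ) (hz : z ≠ 0) (hz1 : z - 1 ≠ 0) (hn : n ≠ 0) :
    κ * ((k * (n - 1) / z) * (2 - ((n - k + 2) / n) * z)
          + κ / z ^ 2 * (2 * (n - 1) + (κ - n + 2 * k + 1) * z)
          + κ * (z - 1) / z * (κ - n + 2 * k + 1)) =
      (2 * n / z) * ((κ * (z - 1) / z) * (2 * (n - 1) + (κ - n + 2 * k + 1) * z)) +
      ((-n - k) * ((κ * (z - 1) / z) * (2 * (n - 1) + (κ - n + 2 * k + 1) * z)) +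
        ((n - 1) * (k ^ 2 + 2 * k * (n - 1) + n * (n - 2)) / n) * (κ * (z - 1))) / (z - 1) +
      (κ * ((1 + k + κ) * (κ + 2 * (n + k - 1)) * z ^ 2 +
        2 * (n - 1) * (2 * n + κ) * (z - 1) ^ 2 -
        2 * (2 * n ^ 2 + 4 * k * n + 3 * n * κ - 2 * (n + k + κ)) * z * (z - 1))) / z ^ 2 := by
  have hz' : z * z⁻¹ = 1 := mul_inv_cancel₀ hz
  have hn' : n * n⁻¹ = 1 := mul_inv_cancel₀ hn
  have hs' : (z - 1) * (z - 1)⁻¹ = 1 := mul_inv_cancel₀ hz1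
  linear_combination ((2 : ℂ) * κ + ((-4 : ℂ)) * k * κ + ((-1 : ℂ)) * k * κ ^ 2 + ((-2 : ℂ)) * k ^ 2 * κ + ((-1 : ℂ)) * (z - 1)⁻¹ * k * κ + ((-1 : ℂ)) * (z - 1)⁻¹ * k * κ ^ 2 + ((-2 : ℂ)) * (z - 1)⁻¹ * k ^ 2 * κ + (2 : ℂ) * n⁻¹ * k * κ + ((-1 : ℂ)) * n⁻¹ * k ^ 2 * κ + ((-4 : ℂ)) * n * κ + ((-1 : ℂ)) * n * κ ^ 2 + (2 : ℂ) * n * k * κ + ((-1 : ℂ)) * n * (z - 1)⁻¹ * κ + ((-1 : ℂ)) * n * (z - 1)⁻¹ * κ ^ 2 + ((-1 : ℂ)) * n * (z - 1)⁻¹ * k * κ + ((-1 : ℂ)) * n * n⁻¹ * k * κ + n * n⁻¹ * k ^ 2 * κ + (2 : ℂ) * n ^ 2 * κ + n ^ 2 * (z - 1)⁻¹ * κ + ((-1 : ℂ)) * n ^ 2 * n⁻¹ * k * κ + z⁻¹ * κ ^ 2 + z⁻¹ * κ ^ 3 + (4 : ℂ) * z⁻¹ * k * κ + (2 : ℂ)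 * z⁻¹ * k * κ ^ 2 + (2 : ℂ) * z⁻¹ * n * κ + ((-1 : ℂ)) * z⁻¹ * n * κ ^ 2 + ((-4 : ℂ)) * z⁻¹ * n * k * κ + ((-2 : ℂ)) * z⁻¹ * n ^ 2 * κ + z * (z - 1)⁻¹ * k * κ + z * (z - 1)⁻¹ * k * κ ^ 2 + (2 : ℂ) * z * (z - 1)⁻¹ * k ^ 2 * κ + z * n * (z - 1)⁻¹ * κ + z * n * (z - 1)⁻¹ * κ ^ 2 + z * n * (z - 1)⁻¹ * k * κ + ((-1 : ℂ)) * z * n ^ 2 * (z - 1)⁻¹ * κ + (2 : ℂ) * z * z⁻¹ * κ + ((-1 : ℂ)) * z * z⁻¹ * κ ^ 2 + ((-1 : ℂ)) * z * z⁻¹ * κ ^ 3 + ((-4 : ℂ)) * z * z⁻¹ * k * κ + ((-3 : ℂ)) * z * z⁻¹ * k * κ ^ 2 + ((-2 : ℂ)) * z * z⁻¹ * k ^ 2 * κ + ((-4 : ℂ)) * z * z⁻¹ * n * κ + (2 : ℂ) * z * z⁻¹ * n * k * κ + (2 : ℂ) * z * z⁻¹ * n ^ 2 * κ) * hz' + (((-1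 : ℂ)) * k * κ + k ^ 2 * κ + (2 : ℂ) * (z - 1)⁻¹ * κ + ((-4 : ℂ)) * (z - 1)⁻¹ * k * κ + (z - 1)⁻¹ * k ^ 2 * κ + ((-1 : ℂ)) * n * k * κ + ((-3 : ℂ)) * n * (z - 1)⁻¹ * κ + (2 : ℂ) * n * (z - 1)⁻¹ * k * κ + n ^ 2 * (z - 1)⁻¹ * κ + ((-2 : ℂ)) * z * (z - 1)⁻¹ * κ + (4 : ℂ) * z * (z - 1)⁻¹ * k * κ + ((-1 : ℂ)) * z * (z - 1)⁻¹ * k ^ 2 * κ + (3 : ℂ) * z * n * (z - 1)⁻¹ * κ + ((-2 : ℂ)) * z * n * (z - 1)⁻¹ * k * κ + ((-1 : ℂ)) * z * n ^ 2 * (z - 1)⁻¹ * κ) * hn' + (((-2 : ℂ)) * κ + (5 : ℂ) * k * κ + k * κ ^ 2 + k ^ 2 * κ + ((-2 : ℂ)) * n⁻¹ * k * κ + n⁻¹ * k ^ 2 * κ + (4 : ℂ) * n * κ + n * κ ^ 2 + ((-1 : ℂ)) * n * k * κ + ((-2 : ℂ)) * n ^ 2 * κ + ((-2 : ℂ)) *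 z⁻¹ * k * κ + ((-2 : ℂ)) * z⁻¹ * n * κ + (2 : ℂ) * z⁻¹ * n * k * κ + (2 : ℂ) * z⁻¹ * n ^ 2 * κ) * hs'

set_option maxHeartbeats 2000000 in
private lemma kzdfL2 (n k κ z : ℂ) (hz : z ≠ 0) (hz1 : z - 1 ≠ 0) (hn : n ≠ 0) :
    κ * ((κ * (z - 1) / z) * (2 * (n - 1) + (κ - n + 2 * k + 1) * z) + 2 * κ ^ 2 * (z - 1)) =
      (2 * n / z) * (κ ^ 2 * (z - 1) ^ 2) + ((-n - k) * (κ ^ 2 * (z - 1) ^ 2)) / (z - 1) +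
      (κ ^ 2 * (z - 1) * z * ((2 * n + 3 * (k + κ) - 1) * z - 2 * (2 * n - 1) * (z - 1))) / z ^ 2 := by
  have hz' : z * z⁻¹ = 1 := mul_inv_cancel₀ hz
  have hn' : n * n⁻¹ = 1 := mul_inv_cancel₀ hn
  have hs' : (z - 1) * (z - 1)⁻¹ = 1 := mul_inv_cancel₀ hz1
  linear_combination ((2 : ℂ) * κ ^ 3 + k * κ ^ 2 + n * κ ^ 2 + ((-2 : ℂ)) * z⁻¹ * κ ^ 2 + (4 : ℂ) * z⁻¹ * n * κ ^ 2 + ((-2 : ℂ)) * z * κ ^ 3 + ((-1 : ℂ)) * z * k * κ ^ 2 + ((-1 : ℂ)) * z * n * κ ^ 2 + (3 : ℂ) * z * z⁻¹ * κ ^ 2 + (3 : ℂ) * z * z⁻¹ * κ ^ 3 + (3 : ℂ) * z * z⁻¹ * k * κ ^ 2 + ((-6 : ℂ)) * z * z⁻¹ * n * κ ^ 2 + ((-1 : ℂ)) * z ^ 2 * z⁻¹ * κ ^ 2 + ((-3 : ℂ)) * z ^ 2 * z⁻¹ * κ ^ 3 + ((-3 : ℂ)) * z ^ 2 * z⁻¹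 * k * κ ^ 2 + (2 : ℂ) * z ^ 2 * z⁻¹ * n * κ ^ 2) * hz' + (0) * hn' + (((-1 : ℂ)) * k * κ ^ 2 + ((-1 : ℂ)) * n * κ ^ 2 + z * k * κ ^ 2 + z * n * κ ^ 2) * hs'

set_option maxHeartbeats 2000000 in
private lemma kzdfL3 (n k κ z : ℂ) (hz : z ≠ 0) (hz1 : z - 1 ≠ 0) (hn : n ≠ 0) :
    κ * (κ ^ 2 * (z - 1) ^ 2) = (κ ^ 3 * (z - 1) ^ 2 * z ^ 2) / z ^ 2 := by
  have hz' : z * z⁻¹ = 1 := mul_inv_cancel₀ hz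
  have hn' : n * n⁻¹ = 1 := mul_inv_cancel₀ hn
  have hs' : (z - 1) * (z - 1)⁻¹ = 1 := mul_inv_cancel₀ hz1
  linear_combination (((-1 : ℂ)) * κ ^ 3 + (2 : ℂ) * z * κ ^ 3 + ((-1 : ℂ)) * z * z⁻¹ * κ ^ 3 + ((-1 : ℂ)) * z ^ 2 * κ ^ 3 + (2 : ℂ) * z ^ 2 * z⁻¹ * κ ^ 3 + ((-1 : ℂ)) * z ^ 3 * z⁻¹ * κ ^ 3) * hz' + (0) * hn' + (0) * hs'

set_option maxHeartbeats 2000000 in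
private lemma kzdf_alg1 (n k κ z W W1 W2 W3 : ℂ) (hz : z ≠ 0) (hz1 : z - 1 ≠ 0)
    (hn : n ≠ 0) :
    κ * ((-(k * (n - 1)) / z ^ 2 * (2 - ((n - k + 2) / n) * z)
          - (k * (n - 1) / z) * ((n - k + 2) / n)) * W +
        ((k * (n - 1) / z) * (2 - ((n - k + 2) / n) * z)
          + κ / z ^ 2 * (2 * (n - 1) + (κ - n + 2 * k + 1) * z)
          + κ * (z - 1) / z * (κ - n + 2 * k + 1)) * W1 +
        ((κ * (z - 1) / z) * (2 * (n - 1) + (κ - n + 2 * k + 1) * z)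
          + 2 * κ ^ 2 * (z - 1)) * W2 +
        κ ^ 2 * (z - 1) ^ 2 * W3) =
      (2 * n / z) * ((k * (n - 1) / z) * (2 - ((n - k + 2) / n) * z) * W + (κ * (z - 1) / z) * (2 * (n - 1) + (κ - n + 2 * k + 1) * z) * W1 + κ ^ 2 * (z - 1) ^ 2 * W2) +
      ((-n - k) * ((k * (n - 1) / z) * (2 - ((n - k + 2) / n) * z) * W + (κ * (z - 1) / z) * (2 * (n - 1) + (κ - n + 2 * k + 1) * z) * W1 + κ ^ 2 * (z - 1) ^ 2 * W2) +
        ((n - 1) * (k ^ 2 + 2 * k * (n - 1) + n * (n - 2)) / n) * (k * W + κ * (z - 1) * W1)) / (z - 1) +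
      (κ ^ 3 * (z - 1) ^ 2 * z ^ 2 * W3 + κ ^ 2 * (z - 1) * z * ((2 * n + 3 * (k + κ) - 1) * z - 2 * (2 * n - 1) * (z - 1)) * W2 + κ * ((1 + k + κ) * (κ + 2 * (n + k - 1)) * z ^ 2 + 2 * (n - 1) * (2 * n + κ) * (z - 1) ^ 2 - 2 * (2 * n ^ 2 + 4 * k * n + 3 * n * κ - 2 * (n + k + κ)) * z * (z - 1)) * W1 + (-(2 * k * (n - 1) * (κ + 2 * (n + k - 1))) * z + 2 * k * (n - 1) * (2 * n + κ) * (z - 1)) * W) / z ^ 2 := by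
  linear_combination W * kzdfL0 n k κ z hz hz1 hn + W1 * kzdfL1 n k κ z hz hz1 hn +
    W2 * kzdfL2 n k κ z hz hz1 hn + W3 * kzdfL3 n k κ z hz hz1 hn

set_option maxHeartbeats 2000000 in
private lemma kzdf_p2 (n k : ℕ) (κ z W2 : ℂ) (hz : z ≠ 0) (hz1 : z - 1 ≠ 0) (hκ : κ ≠ 0) :
    κ ^ 4 * z ^ 4 * (z - 1) ^ 4 * (((dfK₁ n k κ * z + dfK₂ n κ * (z - 1)) / (z * (z - 1))) * W2) =
    κ * z ^ 2 * (z - 1) ^ 2 * (κ ^ 2 * (z - 1) * z * ((2 * (n : ℂ) + 3 * ((k : ℂ) + κ) - 1) * z -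
      2 * (2 * (n : ℂ) - 1) * (z - 1)) * W2) := by
  simp only [dfK₁, dfK₂]
  field_simp
  ring

set_option maxHeartbeats 2000000 in
private lemma kzdf_p1 (n k : ℕ) (κ z W1 : ℂ) (hz : z ≠ 0) (hz1 : z - 1 ≠ 0) (hκ : κ ≠ 0) :
    κ ^ 4 * z ^ 4 * (z - 1) ^ 4 *
      (((dfL₁ n k κ * z ^ 2 + dfL₂ n κ * (z - 1) ^ 2 + dfL₃ n k κ * z * (z - 1)) /
          (z ^ 2 * (z - 1) ^ 2)) * W1) =
    κ * z ^ 2 * (z - 1) ^ 2 *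
      (κ * ((1 + (k : ℂ) + κ) * (κ + 2 * ((n : ℂ) + (k : ℂ) - 1)) * z ^ 2 +
        2 * ((n : ℂ) - 1) * (2 * (n : ℂ) + κ) * (z - 1) ^ 2 -
        2 * (2 * (n : ℂ) ^ 2 + 4 * (k : ℂ) * (n : ℂ) + 3 * (n : ℂ) * κ -
          2 * ((n : ℂ) + (k : ℂ) + κ)) * z * (z - 1)) * W1) := by
  simp only [dfL₁, dfL₂, dfL₃]
  field_simp
  ring

set_option maxHeartbeats 2000000 in
private lemma kzdf_p0 (n k : ℕ) (κ z W : ℂ) (hz : z ≠ 0) (hz1 : z - 1 ≠ 0) (hκ : κ ≠ 0) :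
    κ ^ 4 * z ^ 4 * (z - 1) ^ 4 *
      (((dfM₁ n k κ * z + dfM₂ n k κ * (z - 1)) / (z ^ 2 * (z - 1) ^ 2)) * W) =
    κ * z ^ 2 * (z - 1) ^ 2 *
      ((-(2 * (k : ℂ) * ((n : ℂ) - 1) * (κ + 2 * ((n : ℂ) + (k : ℂ) - 1))) * z +
        2 * (k : ℂ) * ((n : ℂ) - 1) * (2 * (n : ℂ) + κ) * (z - 1)) * W) := by
  simp only [dfM₁, dfM₂]
  field_simp

/-- The rank-3 Knizhnik–Zamolodchikov system `κ g′ = (D/z + N/(z−1)) g` for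
`g = (u, v, w)`. -/
def KZSystem (n k : ℕ) (κ : ℂ) (U : Set ℂ) (u v w : ℂ → ℂ) : Prop :=
  ∀ z ∈ U,
    κ * deriv u z = (2 * (n : ℂ) / z) * u z +
      ((-(n : ℂ) - (k : ℂ)) * u z +
        (((n : ℂ) - 1) * ((k : ℂ) ^ 2 + 2 * (k : ℂ) * ((n : ℂ) - 1) +
          (n : ℂ) * ((n : ℂ) - 2)) / (n : ℂ)) * v z) / (z - 1) ∧
    κ * deriv v z = (2 * ((n : ℂ) - 1) / z) * v z +
      (u z + (-(n : ℂ) - (k : ℂ) + 1) * v z +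
        ((k : ℂ) * ((k : ℂ) + 2 * ((n : ℂ) - 1)) / (n : ℂ)) * w z) / (z - 1) ∧
    κ * deriv w z = (v z + (-(k : ℂ)) * w z) / (z - 1)

/-- The third-order Dotsenko–Fateev ordinary differential equation. -/
def DFEquation (n k : ℕ) (κ : ℂ) (U : Set ℂ) (w : ℂ → ℂ) : Prop :=
  ∀ z ∈ U,
    deriv (deriv (deriv w)) z +
      ((dfK₁ n k κ * z + dfK₂ n κ * (z - 1)) / (z * (z - 1))) * deriv (deriv w) z +
      ((dfL₁ n k κ * z ^ 2 + dfL₂ n κ * (z - 1) ^ 2 + dfL₃ n k κ * z * (z - 1)) /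
          (z ^ 2 * (z - 1) ^ 2)) * deriv w z +
      ((dfM₁ n k κ * z + dfM₂ n k κ * (z - 1)) / (z ^ 2 * (z - 1) ^ 2)) * w z = 0

/-- Reduction of the rank-3 Knizhnik–Zamolodchikov system to the scalar Dotsenko–Fateev
equation: `(u, v, w)` solves the system iff `w` solves the Dotsenko–Fateev equation and
`u`, `v` are recovered from `w` by the stated formulas; in particular `w = 0` forces
`u = v = 0`. -/
theorem kz_reduces_to_dotsenko_fateev (n k : ℕ) (hn : 3 ≤ n) (hk : 1 ≤ k)
    (κ : ℂ) (hκ : κ ≠ 0)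
    (U : Set ℂ) (hU : IsOpen U) (hU0 : (0 : ℂ) ∉ U) (hU1 : (1 : ℂ) ∉ U)
    (u v w : ℂ → ℂ) (hu : DifferentiableOn ℂ u U) (hv : DifferentiableOn ℂ v U)
    (hw : DifferentiableOn ℂ w U) :
    (KZSystem n k κ U u v w ↔
      (DFEquation n k κ U w ∧ ∀ z ∈ U,
        v z = (k : ℂ) * w z + κ * (z - 1) * deriv w z ∧
        u z = ((k : ℂ) * ((n : ℂ) - 1) / z) *
              (2 - (((n : ℂ) - (k : ℂ) + 2) / (n : ℂ)) * z) * w z +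
            (κ * (z - 1) / z) *
              (2 * ((n : ℂ) - 1) + (κ - (n : ℂ) + 2 * (k : ℂ) + 1) * z) * deriv w z +
            κ ^ 2 * (z - 1) ^ 2 * deriv (deriv w) z)) ∧
    (KZSystem n k κ U u v w → (∀ z ∈ U, w z = 0) → ∀ z ∈ U, u z = 0 ∧ v z = 0) := by
  have hn0 : (n : ℂ) ≠ 0 := Nat.cast_ne_zero.mpr (by omega)
  have hwa : AnalyticOnNhd ℂ w U := hw.analyticOnNhd hU
  have hwa1 : AnalyticOnNhd ℂ (deriv w) U := hwa.deriv
  have hwa2 : AnalyticOnNhd ℂ (deriv (deriv w)) U := hwa1.deriv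
  have hd1 : ∀ z ∈ U, HasDerivAt w (deriv w z) z :=
    fun z hz => ((hwa z hz).differentiableAt).hasDerivAt
  have hd2 : ∀ z ∈ U, HasDerivAt (deriv w) (deriv (deriv w) z) z :=
    fun z hz => ((hwa1 z hz).differentiableAt).hasDerivAt
  have hd3 : ∀ z ∈ U, HasDerivAt (deriv (deriv w)) (deriv (deriv (deriv w)) z) z :=
    fun z hz => ((hwa2 z hz).differentiableAt).hasDerivAt
  have hz0 : ∀ z ∈ U, z ≠ 0 := fun z hz h => hU0 (h ▸ hz)
  have hz1 : ∀ z ∈ U, z - 1 ≠ 0 := fun z hz => sub_ne_zero.mpr (fun h => hU1 (h ▸ hz))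
  have hvdOf : ∀ f : ℂ → ℂ, (∀ y ∈ U, f y = (k : ℂ) * w y + κ * (y - 1) * deriv w y) →
      ∀ z ∈ U, deriv f z = ((k : ℂ) + κ) * deriv w z + κ * (z - 1) * deriv (deriv w) z := by
    intro f hf z hz
    have he : f =ᶠ[nhds z] fun y => (k : ℂ) * w y + κ * (y - 1) * deriv w y :=
      Filter.eventuallyEq_of_mem (hU.mem_nhds hz) (fun y hy => hf y hy)
    rw [he.deriv_eq]
    exact (kzdf_vderiv (k : ℂ) κ z _ _ w (hd1 z hz) (hd2 z hz)).deriv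
  have hudOf : ∀ f : ℂ → ℂ, (∀ y ∈ U, f y = ((k : ℂ) * ((n : ℂ) - 1) / y) * (2 - (((n : ℂ) - (k : ℂ) + 2) / (n : ℂ)) * y) * w y + (κ * (y - 1) / y) * (2 * ((n : ℂ) - 1) + (κ - (n : ℂ) + 2 * (k : ℂ) + 1) * y) * deriv w y + κ ^ 2 * (y - 1) ^ 2 * deriv (deriv w) y) →
      ∀ z ∈ U, deriv f z = (-((k : ℂ) * ((n : ℂ) - 1)) / z ^ 2 * (2 - (((n : ℂ) - (k : ℂ) + 2) / (n : ℂ)) * z) - ((k : ℂ) * ((n : ℂ) - 1) / z) * (((n : ℂ) - (k : ℂ) + 2) / (n : ℂ))) * w z + (((k : ℂ) * ((n : ℂ) - 1) / z) * (2 - (((n : ℂ) - (k : ℂ) + 2) / (n : ℂ)) * z) + κ / z ^ 2 * (2 * ((n : ℂ) - 1) + (κ - (n : ℂ) + 2 * (k : ℂ) + 1) * z) + κ * (z - 1) / z * (κ - (n : ℂ) + 2 * (k : ℂ) + 1)) * deriv w z + ((κ * (z - 1) / z) * (2 * ((n : ℂ) - 1) + (κ - (n : ℂ) + 2 * (k :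 ℂ) + 1) * z) + 2 * κ ^ 2 * (z - 1)) * deriv (deriv w) z + κ ^ 2 * (z - 1) ^ 2 * deriv (deriv (deriv w)) z := by
    intro f hf z hz
    have he : f =ᶠ[nhds z] fun y => ((k : ℂ) * ((n : ℂ) - 1) / y) * (2 - (((n : ℂ) - (k : ℂ) + 2) / (n : ℂ)) * y) * w y + (κ * (y - 1) / y) * (2 * ((n : ℂ) - 1) + (κ - (n : ℂ) + 2 * (k : ℂ) + 1) * y) * deriv w y + κ ^ 2 * (y - 1) ^ 2 * deriv (deriv w) y :=
      Filter.eventuallyEq_of_mem (hU.mem_nhds hz) (fun y hy => hf y hy)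
    rw [he.deriv_eq]
    exact (kzdf_uderiv (n : ℂ) (k : ℂ) κ z _ _ _ w (hz0 z hz) (hd1 z hz) (hd2 z hz) (hd3 z hz)).deriv
  have fwd : KZSystem n k κ U u v w → ∀ z ∈ U,
      v z = (k : ℂ) * w z + κ * (z - 1) * deriv w z ∧ u z = ((k : ℂ) * ((n : ℂ) - 1) / z) * (2 - (((n : ℂ) - (k : ℂ) + 2) / (n : ℂ)) * z) * w z + (κ * (z - 1) / z) * (2 * ((n : ℂ) - 1) + (κ - (n : ℂ) + 2 * (k : ℂ) + 1) * z) * deriv w z + κ ^ 2 * (z - 1) ^ 2 * deriv (deriv w) z := by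
    intro hsys
    have hvf : ∀ z ∈ U, v z = (k : ℂ) * w z + κ * (z - 1) * deriv w z := by
      intro z hz
      have h3 := (hsys z hz).2.2
      have hid3 : κ * deriv w z = (((k : ℂ) * w z + κ * (z - 1) * deriv w z) + (-(k : ℂ)) * w z) / (z - 1) := by
        rw [eq_div_iff (hz1 z hz)]; ring
      have h6 := h3.symm.trans hid3
      exact add_right_cancel ((div_left_inj' (hz1 z hz)).mp h6)
    intro z hz
    refine ⟨hvf z hz, ?_⟩
    have h2 := (hsys z hz).2.1
    rw [hvdOf v hvf z hz, hvf z hz] at h2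
    have hid2 := kzdf_alg2 (n : ℂ) (k : ℂ) κ z (w z) (deriv w z) (deriv (deriv w) z)
      (hz0 z hz) (hz1 z hz) hn0
    have h5 : (u z + (-(n : ℂ) - (k : ℂ) + 1) * ((k : ℂ) * w z + κ * (z - 1) * deriv w z) +
          ((k : ℂ) * ((k : ℂ) + 2 * ((n : ℂ) - 1)) / (n : ℂ)) * w z) / (z - 1) =
        ((((k : ℂ) * ((n : ℂ) - 1) / z) * (2 - (((n : ℂ) - (k : ℂ) + 2) / (n : ℂ)) * z) * w z + (κ * (z - 1) / z) * (2 * ((n : ℂ) - 1) + (κ - (n : ℂ) + 2 * (k : ℂ) + 1) * z) * deriv w z + κ ^ 2 * (z - 1) ^ 2 * deriv (deriv w) z) + (-(n : ℂ) - (k : ℂ) + 1) * ((k : ℂ) * w z + κ * (z - 1) * deriv w z) +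
          ((k : ℂ) * ((k : ℂ) + 2 * ((n : ℂ) - 1)) / (n : ℂ)) * w z) / (z - 1) := by
      linear_combination hid2 - h2
    exact add_right_cancel (add_right_cancel ((div_left_inj' (hz1 z hz)).mp h5))
  constructor
  · constructor
    · intro hsys
      have hvf : ∀ z ∈ U, v z = (k : ℂ) * w z + κ * (z - 1) * deriv w z := fun z hz => (fwd hsys z hz).1
      have huf : ∀ z ∈ U, u z = ((k : ℂ) * ((n : ℂ) - 1) / z) * (2 - (((n : ℂ) - (k : ℂ) + 2) / (n : ℂ)) * z) * w z + (κ * (z - 1) / z) * (2 * ((n : ℂ) - 1) + (κ - (n : ℂ) + 2 * (k : ℂ) + 1) * z) * deriv w z + κ ^ 2 * (z - 1) ^ 2 * deriv (deriv w) z := fun z hz => (fwd hsys z hz).2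
      refine ⟨?_, fun z hz => ⟨hvf z hz, huf z hz⟩⟩
      intro z hz
      have hud := hudOf u huf z hz
      have h1 := (hsys z hz).1
      rw [hud, huf z hz, hvf z hz] at h1
      have hid1 := kzdf_alg1 (n : ℂ) (k : ℂ) κ z (w z) (deriv w z) (deriv (deriv w) z)
        (deriv (deriv (deriv w)) z) (hz0 z hz) (hz1 z hz) hn0
      have h9 : (κ ^ 3 * (z - 1) ^ 2 * z ^ 2 * deriv (deriv (deriv w)) z + κ ^ 2 * (z - 1) * z * ((2 * (n : ℂ) + 3 * ((k : ℂ) + κ) - 1) * z - 2 * (2 * (n : ℂ) - 1) * (z - 1)) * deriv (deriv w) z + κ * ((1 + (k : ℂ) + κ) * (κ + 2 * ((n : ℂ) + (k : ℂ) - 1)) * z ^ 2 + 2 * ((n : ℂ) - 1) * (2 * (n : ℂ) + κ) * (z - 1) ^ 2 - 2 * (2 * (n : ℂ) ^ 2 + 4 * (k : ℂ) * (n : ℂ) + 3 * (n : ℂ) * κ - 2 * ((n : ℂ) + (k : ℂ) + κ)) * z * (z - 1)) * deriv w z + (-(2 * (k : ℂ) * ((n : ℂ) - 1) * (κ + 2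 * ((n : ℂ) + (k : ℂ) - 1))) * z + 2 * (k : ℂ) * ((n : ℂ) - 1) * (2 * (n : ℂ) + κ) * (z - 1)) * w z) / z ^ 2 = 0 := by linear_combination h1 - hid1
      have hT : (κ ^ 3 * (z - 1) ^ 2 * z ^ 2 * deriv (deriv (deriv w)) z + κ ^ 2 * (z - 1) * z * ((2 * (n : ℂ) + 3 * ((k : ℂ) + κ) - 1) * z - 2 * (2 * (n : ℂ) - 1) * (z - 1)) * deriv (deriv w) z + κ * ((1 + (k : ℂ) + κ) * (κ + 2 * ((n : ℂ) + (k : ℂ) - 1)) * z ^ 2 + 2 * ((n : ℂ) - 1) * (2 * (n : ℂ) + κ) * (z - 1) ^ 2 - 2 * (2 * (n : ℂ) ^ 2 + 4 * (k : ℂ) * (n : ℂ) + 3 * (n : ℂ) * κ - 2 * ((n : ℂ) + (k : ℂ) + κ)) * z * (z - 1)) * deriv w z + (-(2 * (k : ℂ) * ((n : ℂ) - 1) * (κ + 2 * ((n : ℂ) + (k : ℂ) - 1))) * z + 2 * (k : ℂ) * ((n : ℂ) - 1) * (2 * (n : ℂ) + κ) * (z - 1)) * w z) = 0 :=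
        (div_eq_zero_iff.mp h9).resolve_right (pow_ne_zero 2 (hz0 z hz))
      have hmul : (κ ^ 4 * z ^ 4 * (z - 1) ^ 4) * (deriv (deriv (deriv w)) z + ((dfK₁ n k κ * z + dfK₂ n κ * (z - 1)) / (z * (z - 1))) * deriv (deriv w) z + ((dfL₁ n k κ * z ^ 2 + dfL₂ n κ * (z - 1) ^ 2 + dfL₃ n k κ * z * (z - 1)) / (z ^ 2 * (z - 1) ^ 2)) * deriv w z + ((dfM₁ n k κ * z + dfM₂ n k κ * (z - 1)) / (z ^ 2 * (z - 1) ^ 2)) * w z) =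
          κ * z ^ 2 * (z - 1) ^ 2 * (κ ^ 3 * (z - 1) ^ 2 * z ^ 2 * deriv (deriv (deriv w)) z + κ ^ 2 * (z - 1) * z * ((2 * (n : ℂ) + 3 * ((k : ℂ) + κ) - 1) * z - 2 * (2 * (n : ℂ) - 1) * (z - 1)) * deriv (deriv w) z + κ * ((1 + (k : ℂ) + κ) * (κ + 2 * ((n : ℂ) + (k : ℂ) - 1)) * z ^ 2 + 2 * ((n : ℂ) - 1) * (2 * (n : ℂ) + κ) * (z - 1) ^ 2 - 2 * (2 * (n : ℂ) ^ 2 + 4 * (k : ℂ) * (n : ℂ) + 3 * (n : ℂ) * κ - 2 * ((n : ℂ) + (k : ℂ) + κ)) * z * (z - 1)) * deriv w z + (-(2 * (k : ℂ) * ((n : ℂ) - 1) * (κ + 2 * ((n : ℂ) + (k : ℂ) - 1))) * z + 2 * (k : ℂ) * ((n : ℂ) - 1) * (2 * (n : ℂ) + κ) * (z - 1)) * w z) := by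
        linear_combination kzdf_p2 n k κ z (deriv (deriv w) z) (hz0 z hz) (hz1 z hz) hκ +
          kzdf_p1 n k κ z (deriv w z) (hz0 z hz) (hz1 z hz) hκ +
          kzdf_p0 n k κ z (w z) (hz0 z hz) (hz1 z hz) hκ
      have h11 : (κ ^ 4 * z ^ 4 * (z - 1) ^ 4) * (deriv (deriv (deriv w)) z + ((dfK₁ n k κ * z + dfK₂ n κ * (z - 1)) / (z * (z - 1))) * deriv (deriv w) z + ((dfL₁ n k κ * z ^ 2 + dfL₂ n κ * (z - 1) ^ 2 + dfL₃ n k κ * z * (z - 1)) / (z ^ 2 * (z - 1) ^ 2)) * deriv w z + ((dfM₁ n k κ * z + dfM₂ n k κ * (z - 1)) / (z ^ 2 * (z - 1) ^ 2)) * w z) = 0 := by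
        rw [hmul, hT, mul_zero]
      exact (mul_eq_zero.mp h11).resolve_left
        (mul_ne_zero (mul_ne_zero (pow_ne_zero 4 hκ) (pow_ne_zero 4 (hz0 z hz)))
          (pow_ne_zero 4 (hz1 z hz)))
    · rintro ⟨hDF, hform⟩
      have hvf : ∀ z ∈ U, v z = (k : ℂ) * w z + κ * (z - 1) * deriv w z := fun z hz => (hform z hz).1
      have huf : ∀ z ∈ U, u z = ((k : ℂ) * ((n : ℂ) - 1) / z) * (2 - (((n : ℂ) - (k : ℂ) + 2) / (n : ℂ)) * z) * w z + (κ * (z - 1) / z) * (2 * ((n : ℂ) - 1) + (κ - (n : ℂ) + 2 * (k : ℂ) + 1) * z) * deriv w z + κ ^ 2 * (z - 1) ^ 2 * deriv (deriv w) z := fun z hz => (hform z hz).2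
      intro z hz
      refine ⟨?_, ?_, ?_⟩
      · rw [hudOf u huf z hz, huf z hz, hvf z hz]
        have hid1 := kzdf_alg1 (n : ℂ) (k : ℂ) κ z (w z) (deriv w z) (deriv (deriv w) z)
          (deriv (deriv (deriv w)) z) (hz0 z hz) (hz1 z hz) hn0
        have hmul : (κ ^ 4 * z ^ 4 * (z - 1) ^ 4) * (deriv (deriv (deriv w)) z + ((dfK₁ n k κ * z + dfK₂ n κ * (z - 1)) / (z * (z - 1))) * deriv (deriv w) z + ((dfL₁ n k κ * z ^ 2 + dfL₂ n κ * (z - 1) ^ 2 + dfL₃ n k κ * z * (z - 1)) / (z ^ 2 * (z - 1) ^ 2)) * deriv w z + ((dfM₁ n k κ * z + dfM₂ n k κ * (z - 1)) / (z ^ 2 * (z - 1) ^ 2)) * w z) =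
            κ * z ^ 2 * (z - 1) ^ 2 * (κ ^ 3 * (z - 1) ^ 2 * z ^ 2 * deriv (deriv (deriv w)) z + κ ^ 2 * (z - 1) * z * ((2 * (n : ℂ) + 3 * ((k : ℂ) + κ) - 1) * z - 2 * (2 * (n : ℂ) - 1) * (z - 1)) * deriv (deriv w) z + κ * ((1 + (k : ℂ) + κ) * (κ + 2 * ((n : ℂ) + (k : ℂ) - 1)) * z ^ 2 + 2 * ((n : ℂ) - 1) * (2 * (n : ℂ) + κ) * (z - 1) ^ 2 - 2 * (2 * (n : ℂ) ^ 2 + 4 * (k : ℂ) * (n : ℂ) + 3 * (n : ℂ) * κ - 2 * ((n : ℂ) + (k : ℂ) + κ)) * z * (z - 1)) * deriv w z + (-(2 * (k : ℂ) * ((n : ℂ) - 1) * (κ + 2 * ((n : ℂ) + (k : ℂ) - 1))) * z + 2 * (k : ℂ) * ((n : ℂ) - 1) * (2 * (n : ℂ) + κ) * (z - 1)) * w z) := by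
          linear_combination kzdf_p2 n k κ z (deriv (deriv w) z) (hz0 z hz) (hz1 z hz) hκ +
            kzdf_p1 n k κ z (deriv w z) (hz0 z hz) (hz1 z hz) hκ +
            kzdf_p0 n k κ z (w z) (hz0 z hz) (hz1 z hz) hκ
        have h12 : κ * z ^ 2 * (z - 1) ^ 2 * (κ ^ 3 * (z - 1) ^ 2 * z ^ 2 * deriv (deriv (deriv w)) z + κ ^ 2 * (z - 1) * z * ((2 * (n : ℂ) + 3 * ((k : ℂ) + κ) - 1) * z - 2 * (2 * (n : ℂ) - 1) * (z - 1)) * deriv (deriv w) z + κ * ((1 + (k : ℂ) + κ) * (κ + 2 * ((n : ℂ) + (k : ℂ) - 1)) * z ^ 2 + 2 * ((n : ℂ) - 1) * (2 * (n : ℂ) + κ) * (z - 1) ^ 2 - 2 * (2 * (n : ℂ) ^ 2 + 4 * (k : ℂ) * (n : ℂ) + 3 * (n : ℂ) * κ - 2 * ((n : ℂ) + (k : ℂ) + κ)) * z * (z - 1)) * deriv w z + (-(2 * (k : ℂ) * ((n : ℂ) - 1) * (κ + 2 * ((n : ℂ) + (k : ℂ) - 1))) * z + 2 * (k : ℂ)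 * ((n : ℂ) - 1) * (2 * (n : ℂ) + κ) * (z - 1)) * w z) = 0 := by
          rw [← hmul, hDF z hz, mul_zero]
        have hT : (κ ^ 3 * (z - 1) ^ 2 * z ^ 2 * deriv (deriv (deriv w)) z + κ ^ 2 * (z - 1) * z * ((2 * (n : ℂ) + 3 * ((k : ℂ) + κ) - 1) * z - 2 * (2 * (n : ℂ) - 1) * (z - 1)) * deriv (deriv w) z + κ * ((1 + (k : ℂ) + κ) * (κ + 2 * ((n : ℂ) + (k : ℂ) - 1)) * z ^ 2 + 2 * ((n : ℂ) - 1) * (2 * (n : ℂ) + κ) * (z - 1) ^ 2 - 2 * (2 * (n : ℂ) ^ 2 + 4 * (k : ℂ) * (n : ℂ) + 3 * (n : ℂ) * κ - 2 * ((n : ℂ) + (k : ℂ) + κ)) * z * (z - 1)) * deriv w z + (-(2 * (k : ℂ) * ((n : ℂ) - 1) * (κ + 2 * ((n : ℂ) + (k : ℂ) - 1))) * z + 2 * (k : ℂ) * ((n : ℂ) - 1) * (2 * (n : ℂ) + κ) * (z - 1)) * w z) = 0 :=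
          (mul_eq_zero.mp h12).resolve_left
            (mul_ne_zero (mul_ne_zero hκ (pow_ne_zero 2 (hz0 z hz)))
              (pow_ne_zero 2 (hz1 z hz)))
        linear_combination hid1 + (z ^ 2)⁻¹ * hT
      · rw [hvdOf v hvf z hz, hvf z hz, huf z hz]
        linear_combination kzdf_alg2 (n : ℂ) (k : ℂ) κ z (w z) (deriv w z) (deriv (deriv w) z)
          (hz0 z hz) (hz1 z hz) hn0
      · rw [hvf z hz, eq_div_iff (hz1 z hz)]
        ring
  · intro hsys hw0
    have hdw : ∀ z ∈ U, deriv w z = 0 := by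
      intro z hz
      have he : w =ᶠ[nhds z] fun _ => (0 : ℂ) :=
        Filter.eventuallyEq_of_mem (hU.mem_nhds hz) (fun y hy => hw0 y hy)
      rw [he.deriv_eq]
      exact deriv_const z 0
    have hddw : ∀ z ∈ U, deriv (deriv w) z = 0 := by
      intro z hz
      have he : deriv w =ᶠ[nhds z] fun _ => (0 : ℂ) :=
        Filter.eventuallyEq_of_mem (hU.mem_nhds hz) (fun y hy => hdw y hy)
      rw [he.deriv_eq]
      exact deriv_const z 0
    intro z hz
    obtain ⟨h1, h2⟩ := fwd hsys z hz
    constructor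
    · rw [h2, hw0 z hz, hdw z hz, hddw z hz]; ring
    · rw [h1, hw0 z hz, hdw z hz]; ring
end

section
/- Let q, r ∈ ℂ with q ≠ 0, r ≠ 0 and q² ≠ 1; set s = q − q⁻¹ and z = 1 + (r − r⁻¹)/s. Define the 3×3 complex matrices g₁ = [[0, 1, 0], [1, s, 0], [0, −r⁻¹s, r⁻¹]], g₂ = [[r⁻¹, 0, −s], [0, 0, 1], [0, 1, s]], c₁ = [[0, 0, 0], [0, 0, 0], [1, r⁻¹, z]], c₂ = [[z, r, 1], [0, 0, 0], [0, 0, 0]]. Then: (i) g₁g₂g₁ = g₂g₁g₂; (ii) gᵢ² = 1 + s·gᵢ − r⁻¹s·cᵢ for i = 1, 2; (iii) cᵢ² = z·cᵢ for i = 1, 2, c₁c₂c₁ = c₁ and c₂c₁c₂ = c₂. Consequently, if in addition z ≠ 0, the matrices eᵢ = z⁻¹·cᵢ are idempotents satisfying the Jones relations e₁e₂e₁ = z⁻²·e₁ and e₂e₁e₂ = z⁻²·e₂. -/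
set_option maxHeartbeats 1600000 in
/-- The explicit `3×3` matrix realization of the braiding operators and Jones projections:
braid relation, cubic relation, and the Jones relations with constant `τ = z⁻²`. -/
theorem braiding_and_jones_matrices (q r : ℂ) (hq : q ≠ 0) (hr : r ≠ 0) (hq2 : q ^ 2 ≠ 1)
    (s z : ℂ) (hs : s = q - q⁻¹) (hz : z = 1 + (r - r⁻¹) / s)
    (g₁ g₂ c₁ c₂ : Matrix (Fin 3) (Fin 3) ℂ)
    (hg₁ : g₁ = !![0, 1, 0; 1, s, 0; 0, -(r⁻¹ * s), r⁻¹])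
    (hg₂ : g₂ = !![r⁻¹, 0, -s; 0, 0, 1; 0, 1, s])
    (hc₁ : c₁ = !![0, 0, 0; 0, 0, 0; 1, r⁻¹, z])
    (hc₂ : c₂ = !![z, r, 1; 0, 0, 0; 0, 0, 0]) :
    g₁ * g₂ * g₁ = g₂ * g₁ * g₂ ∧
    g₁ ^ 2 = 1 + s • g₁ - (r⁻¹ * s) • c₁ ∧
    g₂ ^ 2 = 1 + s • g₂ - (r⁻¹ * s) • c₂ ∧
    c₁ ^ 2 = z • c₁ ∧ c₂ ^ 2 = z • c₂ ∧
    c₁ * c₂ * c₁ = c₁ ∧ c₂ * c₁ * c₂ = c₂ ∧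
    (z ≠ 0 →
      (z⁻¹ • c₁) * (z⁻¹ • c₁) = z⁻¹ • c₁ ∧
      (z⁻¹ • c₂) * (z⁻¹ • c₂) = z⁻¹ • c₂ ∧
      (z⁻¹ • c₁) * (z⁻¹ • c₂) * (z⁻¹ • c₁) = (z ^ 2)⁻¹ • (z⁻¹ • c₁) ∧
      (z⁻¹ • c₂) * (z⁻¹ • c₁) * (z⁻¹ • c₂) = (z ^ 2)⁻¹ • (z⁻¹ • c₂)) := by
  have hs0 : s ≠ 0 := by
    rw [hs, sub_ne_zero]
    intro h
    apply hq2
    nth_rw 1 [sq, h]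
    exact inv_mul_cancel₀ hq
  have hzs : z * s = s + r - r⁻¹ := by
    rw [hz]; field_simp; ring
  have e1 : c₁ ^ 2 = z • c₁ := by
    subst hc₁
    rw [pow_two]
    ext i j <;> fin_cases i <;> fin_cases j <;>
      simp [Matrix.mul_apply, Fin.sum_univ_three, Matrix.vecHead, Matrix.vecTail] <;> ring
  have e2 : c₂ ^ 2 = z • c₂ := by
    subst hc₂
    rw [pow_two]
    ext i j <;> fin_cases i <;> fin_cases j <;>
      simp [Matrix.mul_apply, Fin.sum_univ_three, Matrix.vecHead, Matrix.vecTail] <;> ring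
  have e3 : c₁ * c₂ * c₁ = c₁ := by
    subst hc₁ hc₂
    ext i j <;> fin_cases i <;> fin_cases j <;>
      simp [Matrix.mul_apply, Fin.sum_univ_three, Matrix.vecHead, Matrix.vecTail] <;> ring
  have e4 : c₂ * c₁ * c₂ = c₂ := by
    subst hc₁ hc₂
    ext i j <;> fin_cases i <;> fin_cases j <;>
      simp [Matrix.mul_apply, Fin.sum_univ_three, Matrix.vecHead, Matrix.vecTail] <;> ring
  refine ⟨?_, ?_, ?_, e1, e2, e3, e4, fun hz0 => ⟨?_, ?_, ?_, ?_⟩⟩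
  · subst hg₁ hg₂
    ext i j <;> fin_cases i <;> fin_cases j <;>
      simp [Matrix.mul_apply, Fin.sum_univ_three, Matrix.vecHead, Matrix.vecTail] <;> field_simp <;> ring
  · subst hg₁ hc₁
    rw [pow_two, Matrix.one_fin_three, hz]
    ext i j <;> fin_cases i <;> fin_cases j <;>
      simp [Matrix.mul_apply, Fin.sum_univ_three, Matrix.vecHead, Matrix.vecTail] <;>
      field_simp <;> ring
  · subst hg₂ hc₂
    rw [pow_two, Matrix.one_fin_three, hz]
    ext i j <;> fin_cases i <;> fin_cases j <;>
      simp [Matrix.mul_apply, Fin.sum_univ_three, Matrix.vecHead, Matrix.vecTail] <;>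
      field_simp <;> ring
  · rw [smul_mul_smul_comm, ← pow_two c₁, e1, smul_smul]
    congr 1
    field_simp
  · rw [smul_mul_smul_comm, ← pow_two c₂, e2, smul_smul]
    congr 1
    field_simp
  · rw [smul_mul_smul_comm, smul_mul_smul_comm, e3, smul_smul]
    congr 1
    rw [sq, mul_inv]
  · rw [smul_mul_smul_comm, smul_mul_smul_comm, e4, smul_smul]
    congr 1
    rw [sq, mul_inv]
end

section
/- Let Γ be a free abelian group of finite rank and A an abelian group (written multiplicatively), and call a map ε : Γ × Γ → A a 2-cocycle if ε(λ, μ)·ε(λ+μ, ρ) = ε(μ, ρ)·ε(λ, μ+ρ) for all λ, μ, ρ ∈ Γ. For a 2-cocycle ε define its commutator map ω_ε(λ, μ) := ε(λ, μ)·ε(μ, λ)⁻¹. Then: (i) two 2-cocycles ε, ε′ are cohomologous, i.e. ε′(λ, μ) = ε(λ, μ)·a(λ)·a(μ)·a(λ+μ)⁻¹ for some function a : Γ → A, if and only if ω_ε = ω_{ε′}; (ii) for every biadditive map ω : Γ × Γ → A with ω(λ, λ) = 1 for all λ ∈ Γ, there exists a 2-cocycle ε with ω_ε = ω, and ε may moreover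 be chosen normalized so that ε(λ, 0) = 1, ε(0, λ) = 1 and ε(λ, −λ) = 1 for all λ ∈ Γ. -/
/-- A (multiplicative) 2-cocycle on an additive abelian group `Γ` with values in a
commutative group `A` (with trivial action). -/
def IsMulCocycle2 {Γ A : Type*} [AddCommGroup Γ] [CommGroup A] (ε : Γ → Γ → A) : Prop :=
  ∀ l m r : Γ, ε l m * ε (l + m) r = ε m r * ε l (m + r)

section Aux

variable {Γ A : Type*} [AddCommGroup Γ] [CommGroup A]

lemma comm_cancel {B : Type*} [CommGroup B] (x y u v w : B) :
    (x * u * v * w) * (y * v * u * w)⁻¹ = x * y⁻¹ := by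
  apply Additive.ofMul.injective
  simp only [ofMul_mul, ofMul_inv]
  abel

lemma cocycle_zero_right {δ : Γ → Γ → A} (hc : IsMulCocycle2 δ) (l : Γ) : δ l 0 = δ 0 0 := by
  have h := hc l 0 0
  simp only [add_zero] at h
  exact mul_right_cancel h

lemma cocycle_zero_left {δ : Γ → Γ → A} (hc : IsMulCocycle2 δ) (r : Γ) : δ 0 r = δ 0 0 := by
  have h := hc 0 0 r
  simp only [zero_add] at h
  exact (mul_right_cancel h).symm

/-- The extension group structure on `A × Γ` coming from a symmetric 2-cocycle. -/
def extGroup (δ : Γ → Γ → A) (hc : IsMulCocycle2 δ) (hs : ∀ l m, δ l m = δ m l) :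
    CommGroup (A × Γ) where
  mul p q := (p.1 * q.1 * δ p.2 q.2, p.2 + q.2)
  one := ((δ 0 0)⁻¹, 0)
  inv p := (p.1⁻¹ * (δ 0 0)⁻¹ * (δ p.2 (-p.2))⁻¹, -p.2)
  mul_assoc p q r := by
    have h := hc p.2 q.2 r.2
    refine Prod.ext ?_ (add_assoc _ _ _)
    show p.1 * q.1 * δ p.2 q.2 * r.1 * δ (p.2 + q.2) r.2
       = p.1 * (q.1 * r.1 * δ q.2 r.2) * δ p.2 (q.2 + r.2)
    calc p.1 * q.1 * δ p.2 q.2 * r.1 * δ (p.2 + q.2) r.2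
        = p.1 * q.1 * r.1 * (δ p.2 q.2 * δ (p.2 + q.2) r.2) := by ac_rfl
      _ = p.1 * q.1 * r.1 * (δ q.2 r.2 * δ p.2 (q.2 + r.2)) := by rw [h]
      _ = p.1 * (q.1 * r.1 * δ q.2 r.2) * δ p.2 (q.2 + r.2) := by ac_rfl
  one_mul p := by
    refine Prod.ext ?_ (zero_add _)
    show (δ 0 0)⁻¹ * p.1 * δ 0 p.2 = p.1
    rw [cocycle_zero_left hc p.2, mul_right_comm, inv_mul_cancel, one_mul]
  mul_one p := by
    refine Prod.ext ?_ (add_zero _)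
    show p.1 * (δ 0 0)⁻¹ * δ p.2 0 = p.1
    rw [cocycle_zero_right hc p.2, mul_assoc, inv_mul_cancel, mul_one]
  inv_mul_cancel p := by
    refine Prod.ext ?_ (neg_add_cancel _)
    show p.1⁻¹ * (δ 0 0)⁻¹ * (δ p.2 (-p.2))⁻¹ * p.1 * δ (-p.2) p.2 = (δ 0 0)⁻¹
    rw [hs (-p.2) p.2]
    simp [mul_comm, mul_left_comm, mul_assoc]
  mul_comm p q := by
    refine Prod.ext ?_ (add_comm _ _)
    show p.1 * q.1 * δ p.2 q.2 = q.1 * p.1 * δ q.2 p.2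
    rw [hs q.2 p.2]; rw [mul_comm p.1 q.1]

/-- A symmetric 2-cocycle on a free abelian group is a coboundary. -/
lemma symm_cocycle_coboundary [Module.Free ℤ Γ] (δ : Γ → Γ → A)
    (hc : IsMulCocycle2 δ) (hs : ∀ l m, δ l m = δ m l) :
    ∃ a : Γ → A, ∀ l m, δ l m = a l * a m * (a (l + m))⁻¹ := by
  letI G : CommGroup (A × Γ) := extGroup δ hc hs
  letI : AddCommGroup (Additive (A × Γ)) := Additive.addCommGroup
  let πa : Additive (A × Γ) →+ Γ :=
    { toFun := fun p => (Additive.toMul p).2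
      map_zero' := rfl
      map_add' := fun p q => rfl }
  let π : Additive (A × Γ) →ₗ[ℤ] Γ := πa.toIntLinearMap
  have hsurj : Function.Surjective π := fun l => ⟨Additive.ofMul ((1 : A), l), rfl⟩
  obtain ⟨s, hsec⟩ := Module.projective_lifting_property π (LinearMap.id) hsurj
  have hsnd : ∀ l : Γ, (Additive.toMul (s l)).2 = l := fun l =>
    congrArg (fun f => f l) (congrArg (fun (f : Γ →ₗ[ℤ] Γ) => (f : Γ → Γ)) hsec)
  refine ⟨fun l => ((Additive.toMul (s l)).1)⁻¹, fun l m => ?_⟩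
  have hadd : s (l + m) = s l + s m := map_add s l m
  have htm : Additive.toMul (s (l + m)) = Additive.toMul (s l) * Additive.toMul (s m) := by
    rw [hadd]; rfl
  have h1 : (Additive.toMul (s (l + m))).1
      = (Additive.toMul (s l)).1 * (Additive.toMul (s m)).1
        * δ (Additive.toMul (s l)).2 (Additive.toMul (s m)).2 := by
    rw [htm]; rfl
  rw [hsnd, hsnd] at h1
  rw [inv_inv, h1]
  simp [mul_comm, mul_left_comm, mul_assoc]

/-- A biadditive map with the prescribed (alternating biadditive) commutator. -/
lemma exists_biadditive [Module.Free ℤ Γ] [Module.Finite ℤ Γ]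
    (ω : Γ → Γ → A)
    (h1 : ∀ l l' m : Γ, ω (l + l') m = ω l m * ω l' m)
    (h2 : ∀ l m m' : Γ, ω l (m + m') = ω l m * ω l m')
    (h3 : ∀ l : Γ, ω l l = 1) :
    ∃ ε : Γ → Γ → A,
      (∀ l l' m : Γ, ε (l + l') m = ε l m * ε l' m) ∧
      (∀ l m m' : Γ, ε l (m + m') = ε l m * ε l m') ∧
      (∀ l m : Γ, ε l m * (ε m l)⁻¹ = ω l m) := by
  classical
  set ι := Module.Free.ChooseBasisIndex ℤ Γ with hι
  letI : Fintype ι := Module.Free.ChooseBasisIndex.fintype ℤ Γ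
  letI : LinearOrder ι := LinearOrder.lift' (Fintype.equivFin ι) (Equiv.injective _)
  set b := Module.Free.chooseBasis ℤ Γ with hb
  set c : Γ → ι → ℤ := fun l i => b.repr l i with hc
  have hanti : ∀ x y : Γ, ω y x = (ω x y)⁻¹ := by
    intro x y
    have h := h3 (x + y)
    rw [h1, h2, h2, h3, h3, one_mul, mul_one] at h
    exact eq_inv_of_mul_eq_one_right ((mul_comm (ω x y) (ω y x)) ▸ h)
  set ε : Γ → Γ → A := fun l m => ∏ i : ι, ∏ j : ι,
      if i < j then (ω (b i) (b j)) ^ (c l i * c m j) else 1 with hε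
  have hcadd : ∀ l l' : Γ, ∀ i, c (l + l') i = c l i + c l' i := by
    intro l l' i; simp [hc]
  have hεl : ∀ l l' m : Γ, ε (l + l') m = ε l m * ε l' m := by
    intro l l' m
    rw [hε, ← Finset.prod_mul_distrib]
    refine Finset.prod_congr rfl fun i _ => ?_
    rw [← Finset.prod_mul_distrib]
    refine Finset.prod_congr rfl fun j _ => ?_
    by_cases h : i < j
    · simp only [h, if_true, hcadd, add_mul, zpow_add]
    · simp [h]
  have hεr : ∀ l m m' : Γ, ε l (m + m') = ε l m * ε l m' := by
    intro l m m'
    rw [hε, ← Finset.prod_mul_distrib]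
    refine Finset.prod_congr rfl fun i _ => ?_
    rw [← Finset.prod_mul_distrib]
    refine Finset.prod_congr rfl fun j _ => ?_
    by_cases h : i < j
    · simp only [h, if_true, hcadd, mul_add, zpow_add]
    · simp [h]
  refine ⟨ε, hεl, hεr, ?_⟩
  set F : Γ → Γ →+ Additive A := fun x =>
    AddMonoidHom.mk' (fun m => Additive.ofMul (ω x m))
      (fun m m' => congrArg Additive.ofMul (h2 x m m')) with hF
  set G : Γ → Γ →+ Additive A := fun m =>
    AddMonoidHom.mk' (fun l => Additive.ofMul (ω l m))
      (fun l l' => congrArg Additive.ofMul (h1 l l' m)) with hG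
  have eqG : ∀ l m : Γ, Additive.ofMul (ω l m)
      = ∑ i : ι, c l i • Additive.ofMul (ω (b i) m) := by
    intro l m
    have : Additive.ofMul (ω l m) = G m l := rfl
    rw [this]
    conv_lhs => rw [← Module.Basis.sum_repr b l]
    rw [map_sum]
    simp only [map_zsmul]
    rfl
  have eqF : ∀ x m : Γ, Additive.ofMul (ω x m)
      = ∑ j : ι, c m j • Additive.ofMul (ω x (b j)) := by
    intro x m
    have : Additive.ofMul (ω x m) = F x m := rfl
    rw [this]
    conv_lhs => rw [← Module.Basis.sum_repr b m]
    rw [map_sum]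
    simp only [map_zsmul]
    rfl
  have key : ∀ l m : Γ, ω l m = ∏ i : ι, ∏ j : ι, (ω (b i) (b j)) ^ (c l i * c m j) := by
    intro l m
    have e : Additive.ofMul (ω l m)
        = ∑ i : ι, ∑ j : ι, (c l i * c m j) • Additive.ofMul (ω (b i) (b j)) := by
      rw [eqG l m]
      refine Finset.sum_congr rfl fun i _ => ?_
      rw [eqF (b i) m, Finset.smul_sum]
      refine Finset.sum_congr rfl fun j _ => ?_
      rw [smul_smul]
    have e2 := congrArg Additive.toMul e
    simpa only [toMul_sum, toMul_zsmul, toMul_ofMul] using e2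
  intro l m
  have split : ∀ i j : ι, (ω (b i) (b j)) ^ (c l i * c m j)
      = (if i < j then (ω (b i) (b j)) ^ (c l i * c m j) else 1)
        * (if j < i then (ω (b i) (b j)) ^ (c l i * c m j) else 1) := by
    intro i j
    rcases lt_trichotomy i j with h | h | h
    · simp [h, asymm h]
    · subst h; simp [lt_irrefl, h3]
    · simp [h, asymm h]
  have hT : ε m l = (∏ i : ι, ∏ j : ι,
      if j < i then (ω (b i) (b j)) ^ (c l i * c m j) else 1)⁻¹ := by
    simp only [hε]
    rw [Finset.prod_comm, ← Finset.prod_inv_distrib]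
    refine Finset.prod_congr rfl fun i _ => ?_
    rw [← Finset.prod_inv_distrib]
    refine Finset.prod_congr rfl fun j _ => ?_
    by_cases h : j < i
    · rw [if_pos h, if_pos h, hanti (b i) (b j), mul_comm (c m j) (c l i), inv_zpow]
    · rw [if_neg h, if_neg h, inv_one]
  have expand : (∏ i : ι, ∏ j : ι, (ω (b i) (b j)) ^ (c l i * c m j))
      = ε l m * ∏ i : ι, ∏ j : ι,
          (if j < i then (ω (b i) (b j)) ^ (c l i * c m j) else 1) := by
    simp only [hε]
    rw [← Finset.prod_mul_distrib]
    refine Finset.prod_congr rfl fun i _ => ?_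
    rw [← Finset.prod_mul_distrib]
    exact Finset.prod_congr rfl fun j _ => split i j
  rw [key l m, expand, hT, inv_inv]

end Aux

/-- On a free abelian group of finite rank: (i) two 2-cocycles are cohomologous iff they have
the same commutator map; (ii) every alternating biadditive form is the commutator map of a
2-cocycle, which may be chosen normalized. -/
theorem cocycles_on_free_abelian (Γ : Type*) [AddCommGroup Γ]
    [Module.Free ℤ Γ] [Module.Finite ℤ Γ]
    (A : Type*) [CommGroup A] :
    (∀ ε ε' : Γ → Γ → A, IsMulCocycle2 ε → IsMulCocycle2 ε' →
      ((∃ a : Γ → A, ∀ l m : Γ, ε' l m = ε l m * a l * a m * (a (l + m))⁻¹) ↔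
        (∀ l m : Γ, ε l m * (ε m l)⁻¹ = ε' l m * (ε' m l)⁻¹))) ∧
    (∀ ω : Γ → Γ → A,
      (∀ l l' m : Γ, ω (l + l') m = ω l m * ω l' m) →
      (∀ l m m' : Γ, ω l (m + m') = ω l m * ω l m') →
      (∀ l : Γ, ω l l = 1) →
      ∃ ε : Γ → Γ → A, IsMulCocycle2 ε ∧
        (∀ l m : Γ, ε l m * (ε m l)⁻¹ = ω l m) ∧
        (∀ l : Γ, ε l 0 = 1 ∧ ε 0 l = 1 ∧ ε l (-l) = 1)) := by
  constructor
  · -- Part (i)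
    intro ε ε' hc hc'
    constructor
    · rintro ⟨a, ha⟩ l m
      rw [ha l m, ha m l, add_comm m l]
      exact (comm_cancel (ε l m) (ε m l) (a l) (a m) (a (l + m))⁻¹).symm
    · intro hcomm
      set δ : Γ → Γ → A := fun l m => ε' l m * (ε l m)⁻¹ with hδ
      have hδc : IsMulCocycle2 δ := by
        intro l m r
        have h := hc l m r
        have h' := hc' l m r
        have key : (ε' l m * ε' (l + m) r) * (ε l m * ε (l + m) r)⁻¹
            = (ε' m r * ε' l (m + r)) * (ε m r * ε l (m + r))⁻¹ := by rw [h, h']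
        simp only [hδ, mul_inv_rev] at key ⊢
        calc δ l m * δ (l + m) r
            = (ε' l m * ε' (l + m) r) * ((ε (l + m) r)⁻¹ * (ε l m)⁻¹) := by
              simp only [hδ]; ac_rfl
          _ = (ε' m r * ε' l (m + r)) * ((ε l (m + r))⁻¹ * (ε m r)⁻¹) := key
          _ = δ m r * δ l (m + r) := by simp only [hδ]; ac_rfl
      have hδs : ∀ l m, δ l m = δ m l := by
        intro l m
        have h := hcomm l m
        rw [← div_eq_mul_inv, ← div_eq_mul_inv, div_eq_div_iff_mul_eq_mul] at h
        simp only [hδ]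
        rw [← div_eq_mul_inv, ← div_eq_mul_inv, div_eq_div_iff_mul_eq_mul]
        rw [← h]; exact mul_comm _ _
      obtain ⟨a, ha⟩ := symm_cocycle_coboundary δ hδc hδs
      refine ⟨a, fun l m => ?_⟩
      have h := ha l m
      simp only [hδ] at h
      calc ε' l m = ε' l m * (ε l m)⁻¹ * ε l m := by rw [inv_mul_cancel_right]
        _ = ε l m * a l * a m * (a (l + m))⁻¹ := by rw [h]; ac_rfl
  · -- Part (ii)
    intro ω h1 h2 h3
    obtain ⟨ε, hl, hr, hcomm⟩ := exists_biadditive ω h1 h2 h3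
    classical
    -- basic consequences of biadditivity
    have hε0r : ∀ l : Γ, ε l 0 = 1 := by
      intro l
      have h := hr l 0 0
      rw [add_zero] at h
      exact (left_eq_mul.mp h)
    have hε0l : ∀ m : Γ, ε 0 m = 1 := by
      intro m
      have h := hl 0 0 m
      rw [add_zero] at h
      exact (left_eq_mul.mp h)
    have hεnegl : ∀ l m : Γ, ε (-l) m = (ε l m)⁻¹ := by
      intro l m
      have h := hl l (-l) m
      rw [add_neg_cancel, hε0l] at h
      exact eq_inv_of_mul_eq_one_right h.symm
    have hεnegr : ∀ l m : Γ, ε l (-m) = (ε l m)⁻¹ := by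
      intro l m
      have h := hr l m (-m)
      rw [add_neg_cancel, hε0r] at h
      exact eq_inv_of_mul_eq_one_right h.symm
    have hνsym : ∀ l : Γ, ε (-l) l = ε l (-l) := by
      intro l
      rw [hεnegl, hεnegr]
    -- a choice function pairing l with -l
    letI st : Setoid Γ :=
      ⟨fun l m => m = l ∨ m = -l, by
        constructor
        · exact fun x => Or.inl rfl
        · rintro x y (h | h)
          · exact Or.inl h.symm
          · exact Or.inr (by rw [h, neg_neg])
        · rintro x y z (h | h) (h' | h')
          · exact Or.inl (h'.trans h)
          · exact Or.inr (by rw [h', h])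
          · exact Or.inr (by rw [h', h])
          · exact Or.inl (by rw [h', h, neg_neg])⟩
    set a : Γ → A := fun l =>
      if (Quotient.mk st l).out = l then (ε l (-l))⁻¹ else 1 with haf
    have ha0 : a 0 = 1 := by
      simp only [haf]
      split <;> simp [hε0r]
    have haa : ∀ l : Γ, a l * a (-l) = (ε l (-l))⁻¹ := by
      intro l
      by_cases hl0 : l = 0
      · subst hl0
        simp [ha0, hε0r]
      have hne : l ≠ -l := by
        intro h
        apply hl0
        have h2 : (2 : ℤ) • l = 0 := by
          rw [two_smul]
          nth_rewrite 2 [h]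
          exact add_neg_cancel l
        rcases smul_eq_zero.mp h2 with h' | h'
        · exact absurd h' two_ne_zero
        · exact h'
      have hq : (Quotient.mk st (-l)) = (Quotient.mk st l) :=
        Quotient.sound (Or.inr (neg_neg l).symm)
      have hout : l = (Quotient.mk st l).out ∨ l = -(Quotient.mk st l).out :=
        Quotient.mk_out (s := st) l
      rcases hout with hout | hout
      · -- the representative is l itself
        have e1 : (Quotient.mk st l).out = l := hout.symm
        have e2 : (Quotient.mk st (-l)).out ≠ -l := by
          rw [hq, e1]; exact hne
        simp only [haf]
        rw [if_pos e1, if_neg e2, mul_one]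
      · -- the representative is -l
        have e0 : (Quotient.mk st l).out = -l := by
          have h' := congrArg Neg.neg hout
          rw [neg_neg] at h'
          exact h'.symm
        have e1 : (Quotient.mk st l).out ≠ l := by
          rw [e0]; exact (Ne.symm hne)
        have e2 : (Quotient.mk st (-l)).out = -l := by
          rw [hq]; exact e0
        simp only [haf]
        rw [if_neg e1, if_pos e2, one_mul, neg_neg, hνsym l]
    -- the normalized cocycle
    set ε' : Γ → Γ → A := fun l m => ε l m * a l * a m * (a (l + m))⁻¹ with hε'
    have hcoc : IsMulCocycle2 ε' := by
      intro l m r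
      simp only [hε']
      have h : ε l m * ε (l + m) r = ε m r * ε l (m + r) := by
        rw [hl l m r, hr l m r]
        ac_rfl
      calc ε l m * a l * a m * (a (l + m))⁻¹ *
            (ε (l + m) r * a (l + m) * a r * (a (l + m + r))⁻¹)
          = (ε l m * ε (l + m) r) * (a l * a m * a r * (a (l + m + r))⁻¹)
              * ((a (l + m))⁻¹ * a (l + m)) := by ac_rfl
        _ = (ε l m * ε (l + m) r) * (a l * a m * a r * (a (l + m + r))⁻¹) := by
              rw [inv_mul_cancel, mul_one]
        _ = (ε m r * ε l (m + r)) * (a l * a m * a r * (a (l + (m + r)))⁻¹) := by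
              rw [h, add_assoc]
        _ = (ε m r * ε l (m + r)) * (a l * a m * a r * (a (l + (m + r)))⁻¹)
              * ((a (m + r))⁻¹ * a (m + r)) := by rw [inv_mul_cancel, mul_one]
        _ = ε m r * a m * a r * (a (m + r))⁻¹ *
            (ε l (m + r) * a l * a (m + r) * (a (l + (m + r)))⁻¹) := by ac_rfl
    refine ⟨ε', hcoc, fun l m => ?_, fun l => ?_⟩
    · -- commutator
      simp only [hε']
      rw [add_comm m l, comm_cancel (ε l m) (ε m l) (a l) (a m) (a (l + m))⁻¹]
      exact hcomm l m
    · refine ⟨?_, ?_, ?_⟩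
      · simp only [hε']
        rw [hε0r, add_zero, ha0, one_mul, mul_one, mul_inv_cancel]
      · simp only [hε']
        rw [hε0l, zero_add, ha0, one_mul, one_mul, mul_inv_cancel]
      · simp only [hε']
        rw [add_neg_cancel, ha0, inv_one, mul_one, mul_assoc, haa l, mul_inv_cancel]
end

section
/- For every function g : ℤ → [0, ∞] (extended nonnegative reals), the sum of g(k − l) over all pairs (k, l) ∈ ℤ × ℤ with k ≤ 0 < l or l ≤ 0 < k equals Σ_{m∈ℤ} |m|·g(m). -/
open scoped ENNReal

/-- The sum of `g(k − l)` over the pairs `(k, l)` with `k ≤ 0 < l` or `l ≤ 0 < k` equals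
`Σ_m |m|·g(m)` (Hilbert–Schmidt norm of the commutator with the Hardy complex structure). -/
theorem sum_commutator_hardy (g : ℤ → ℝ≥0∞) :
    ∑' p : ℤ × ℤ,
        (if (p.1 ≤ 0 ∧ 0 < p.2) ∨ (p.2 ≤ 0 ∧ 0 < p.1) then g (p.1 - p.2) else 0) =
      ∑' m : ℤ, (m.natAbs : ℝ≥0∞) * g m := by
  let e : ℤ × ℤ ≃ ℤ × ℤ :=
    ⟨fun p => (p.1 + p.2, p.2), fun p => (p.1 - p.2, p.2),
      fun p => by simp, fun p => by simp⟩
  rw [← Equiv.tsum_eq e]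
  have he : ∀ p : ℤ × ℤ,
      (if ((e p).1 ≤ 0 ∧ 0 < (e p).2) ∨ ((e p).2 ≤ 0 ∧ 0 < (e p).1) then
          g ((e p).1 - (e p).2) else 0) =
      (if (p.1 + p.2 ≤ 0 ∧ 0 < p.2) ∨ (p.2 ≤ 0 ∧ 0 < p.1 + p.2) then g p.1 else 0) := by
    intro p
    simp only [e, Equiv.coe_fn_mk, add_sub_cancel_right]
  rw [tsum_congr he]
  rw [ENNReal.tsum_prod']
  refine tsum_congr fun m => ?_
  have hmem : ∀ l : ℤ,
      ((m + l ≤ 0 ∧ 0 < l) ∨ (l ≤ 0 ∧ 0 < m + l)) ↔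
        l ∈ Finset.Ioc (min 0 (-m)) (max 0 (-m)) := by
    intro l
    simp only [Finset.mem_Ioc]
    omega
  have h1 : ∑' l : ℤ, (if (m + l ≤ 0 ∧ 0 < l) ∨ (l ≤ 0 ∧ 0 < m + l) then g m else 0) =
      ∑ l ∈ Finset.Ioc (min 0 (-m)) (max 0 (-m)),
        (if (m + l ≤ 0 ∧ 0 < l) ∨ (l ≤ 0 ∧ 0 < m + l) then g m else 0) := by
    refine tsum_eq_sum fun b hb => ?_
    rw [if_neg]
    exact fun h => hb ((hmem b).mp h)
  rw [h1, Finset.sum_congr rfl fun l hl => if_pos ((hmem l).mpr hl), Finset.sum_const,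
    Int.card_Ioc, nsmul_eq_mul]
  congr 1
  norm_cast
  omega
end
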